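/- arXiv:2006.04743 — 4 statements merged into one kernel-verified Lean document; each statement's English description precedes it below -/
import Mathlib

section
/- Given any unambiguous configuration $(x, w)$ — points $x_1,\ldots,x_N \in \mathbb{R}^d$ with nonnegative integer weights $w_1,\ldots,w_N$ summing to $N$, such that for every nonnegative integer vector $f$ summing to $N+1$ the distances $|x_j - \frac{1}{N+1}\sum_i f_i x_i|$ are pairwise distinct over $j \in [N]$ — there exist $m \le (N-1)^2$ and a sequence $\ell_1,\ldots,\ell_m \in [N]$, valid for $(x,w)$ (each $\ell_i$ has positive weight when it branches), such that after applying the branching-and-killing dynamics the final weight vector $w^{(m)}$ has exactly one nonzero entry. -/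
open Finset

/-- The barycenter after the particle at site `ℓ` branches: total weight `N + 1`. -/
noncomputable def branchBary {d N : ℕ} (x : Fin N → EuclideanSpace ℝ (Fin d))
    (w : Fin N → ℕ) (ℓ : Fin N) : EuclideanSpace ℝ (Fin d) :=
  ((N : ℝ) + 1)⁻¹ • ((∑ i, (w i : ℝ) • x i) + x ℓ)

/-- A configuration is unambiguous if for every multiplicity vector `f` summing to
`N + 1`, the distances of the points to the corresponding barycenter are pairwise
distinct. -/
def Unambiguous {d N : ℕ} (x : Fin N → EuclideanSpace ℝ (Fin d)) : Prop :=
  ∀ f : Fin N → ℕ, (∑ i, f i) = N + 1 → ∀ j k : Fin N, j ≠ k →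
    ‖x j - ((N : ℝ) + 1)⁻¹ • ∑ i, (f i : ℝ) • x i‖ ≠
      ‖x k - ((N : ℝ) + 1)⁻¹ • ∑ i, (f i : ℝ) • x i‖

/-- `k` is the index killed when site `ℓ` branches: among the positive-weight sites,
`x k` is farthest from the post-branching barycenter. -/
def IsKilled {d N : ℕ} (x : Fin N → EuclideanSpace ℝ (Fin d)) (w : Fin N → ℕ)
    (ℓ k : Fin N) : Prop :=
  0 < w k ∧ ∀ j, 0 < w j → ‖x j - branchBary x w ℓ‖ ≤ ‖x k - branchBary x w ℓ‖

/-- One step of the branching-and-killing dynamics at site `ℓ`. -/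
def Step {d N : ℕ} (x : Fin N → EuclideanSpace ℝ (Fin d)) (w : Fin N → ℕ) (ℓ : Fin N)
    (w' : Fin N → ℕ) : Prop :=
  0 < w ℓ ∧ ∃ k, IsKilled x w ℓ k ∧
    w' = fun j => w j + (if j = ℓ then 1 else 0) - (if j = k then 1 else 0)

/-! ### Auxiliary definitions and lemmas -/

/-- The barycenter of the configuration with weights `w`. -/
noncomputable def stmtBary {d N : ℕ} (x : Fin N → EuclideanSpace ℝ (Fin d))
    (w : Fin N → ℕ) : EuclideanSpace ℝ (Fin d) :=
  ((N : ℝ))⁻¹ • ∑ i, (w i : ℝ) • x i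

/-- The number of positive-weight sites. -/
def suppCard {N : ℕ} (w : Fin N → ℕ) : ℕ :=
  (Finset.univ.filter fun j => 0 < w j).card

lemma sub_branchBary {d N : ℕ} (hN : 0 < N) (x : Fin N → EuclideanSpace ℝ (Fin d))
    (w : Fin N → ℕ) (ℓ j : Fin N) :
    x j - branchBary x w ℓ =
      (x j - stmtBary x w) - ((N : ℝ) + 1)⁻¹ • (x ℓ - stmtBary x w) := by
  have hn : (0:ℝ) < N := by exact_mod_cast hN
  have hS : ∑ i, (w i : ℝ) • x i = (N : ℝ) • stmtBary x w := by
    rw [stmtBary, smul_inv_smul₀ hn.ne']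
  rw [branchBary, hS]
  match_scalars <;> field_simp <;> ring

lemma branchBary_eq_f {d N : ℕ} (x : Fin N → EuclideanSpace ℝ (Fin d))
    (w : Fin N → ℕ) (ℓ : Fin N) :
    branchBary x w ℓ = ((N : ℝ) + 1)⁻¹ •
      ∑ i, ((w i + (if i = ℓ then 1 else 0) : ℕ) : ℝ) • x i := by
  rw [branchBary]
  congr 1
  have h : ∀ i : Fin N, ((w i + (if i = ℓ then 1 else 0) : ℕ) : ℝ) • x i
      = (w i : ℝ) • x i + (if i = ℓ then (1:ℝ) else 0) • x i := by
    intro i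
    push_cast
    rw [add_smul]
  rw [Finset.sum_congr rfl (fun i _ => h i), Finset.sum_add_distrib]
  simp [ite_smul]

lemma exists_kill {d N : ℕ} (hN : 0 < N) (x : Fin N → EuclideanSpace ℝ (Fin d))
    (hU : Unambiguous x) (w : Fin N → ℕ) (hw : ∑ i, w i = N) (ℓ : Fin N)
    (hℓ : 0 < w ℓ) (j : Fin N) (hj : j ≠ ℓ) (hjw : 0 < w j)
    (hwit : ‖x ℓ - stmtBary x w‖ ≤ ‖x j - stmtBary x w‖) :
    ∃ k, IsKilled x w ℓ k ∧ k ≠ ℓ := by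
  obtain ⟨k, hk, hkmax⟩ := Finset.exists_max_image (univ.filter (fun i => 0 < w i))
    (fun i => ‖x i - branchBary x w ℓ‖) ⟨ℓ, by simpa using hℓ⟩
  have hkw : 0 < w k := by simpa using hk
  refine ⟨k, ⟨hkw, fun i hi => hkmax i (by simpa using hi)⟩, ?_⟩
  intro hkl
  subst hkl
  have hne : ‖x j - branchBary x w k‖ ≠ ‖x k - branchBary x w k‖ := by
    have hsum : ∑ i, (w i + (if i = k then 1 else 0)) = N + 1 := by
      rw [Finset.sum_add_distrib, hw]
      simp
    have := hU (fun i => w i + (if i = k then 1 else 0)) hsum j k hj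
    rwa [branchBary_eq_f x w k]
  have hlt : ‖x j - branchBary x w k‖ < ‖x k - branchBary x w k‖ :=
    lt_of_le_of_ne (hkmax j (by simpa using hjw)) hne
  set α : ℝ := ((N : ℝ) + 1)⁻¹ with hα
  have hα0 : 0 < α := by positivity
  have hα1 : α ≤ 1 := by
    rw [hα]
    apply inv_le_one_of_one_le₀
    have : (1:ℝ) ≤ N := by exact_mod_cast hN
    linarith
  have hid := sub_branchBary hN x w
  have hcl : ‖x k - branchBary x w k‖ = (1 - α) * ‖x k - stmtBary x w‖ := by
    rw [hid k k]
    have : (x k - stmtBary x w) - α • (x k - stmtBary x w)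
        = (1 - α) • (x k - stmtBary x w) := by
      rw [sub_smul, one_smul]
    rw [this, norm_smul, Real.norm_eq_abs, abs_of_nonneg (by linarith)]
  have hcj : ‖x j - stmtBary x w‖ - α * ‖x k - stmtBary x w‖
      ≤ ‖x j - branchBary x w k‖ := by
    rw [hid k j]
    calc ‖x j - stmtBary x w‖ - α * ‖x k - stmtBary x w‖
        = ‖x j - stmtBary x w‖ - ‖α • (x k - stmtBary x w)‖ := by
          rw [norm_smul, Real.norm_eq_abs, abs_of_nonneg hα0.le]
      _ ≤ _ := norm_sub_norm_le _ _
  nlinarith [norm_nonneg (x k - stmtBary x w)]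

lemma key_geom {V : Type*} [NormedAddCommGroup V] [NormedSpace ℝ V]
    (a c : V) (n : ℝ) (hn : 1 ≤ n)
    (h : ‖a - (n+1)⁻¹ • a‖ ≤ ‖c - (n+1)⁻¹ • a‖) :
    ‖a - n⁻¹ • (a - c)‖ ≤ ‖c - n⁻¹ • (a - c)‖ := by
  have hn0 : (0:ℝ) < n := by linarith
  have hn1 : (0:ℝ) < n + 1 := by linarith
  set D : V := (n+1) • c - a with hD
  have h1 : c - (n+1)⁻¹ • a = (n+1)⁻¹ • D := by
    rw [hD]; match_scalars <;> field_simp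
  have h2 : a - (n+1)⁻¹ • a = (n+1)⁻¹ • (n • a) := by
    match_scalars
    field_simp; ring
  have hna : n * ‖a‖ ≤ ‖D‖ := by
    rw [h1, h2, norm_smul ((n+1)⁻¹), norm_smul ((n+1)⁻¹), norm_smul n,
      Real.norm_eq_abs, Real.norm_eq_abs, abs_of_pos (inv_pos.mpr hn1),
      abs_of_pos hn0] at h
    exact (mul_le_mul_iff_right₀ (inv_pos.mpr hn1)).mp h
  have g1 : a - n⁻¹ • (a - c) = n⁻¹ • ((n-1) • a + c) := by
    match_scalars; field_simp; ring
  have g2 : c - n⁻¹ • (a - c) = n⁻¹ • D := by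
    rw [hD]; match_scalars <;> field_simp <;> ring
  rw [g1, g2, norm_smul, norm_smul, Real.norm_eq_abs, abs_of_pos (inv_pos.mpr hn0)]
  apply mul_le_mul_of_nonneg_left ?_ (inv_pos.mpr hn0).le
  have e3 : (n+1) • ((n-1) • a + c) = (n*n) • a + D := by
    rw [hD]; match_scalars <;> ring
  have e4 : (n+1) * ‖(n-1) • a + c‖ = ‖(n*n) • a + D‖ := by
    rw [← e3, norm_smul, Real.norm_eq_abs, abs_of_pos hn1]
  have e5 : ‖(n*n) • a + D‖ ≤ n * n * ‖a‖ + ‖D‖ := by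
    calc ‖(n*n) • a + D‖ ≤ ‖(n*n) • a‖ + ‖D‖ := norm_add_le _ _
      _ = n * n * ‖a‖ + ‖D‖ := by
          rw [norm_smul, Real.norm_eq_abs, abs_of_pos (by nlinarith : (0:ℝ) < n*n)]
  nlinarith [norm_nonneg a, norm_nonneg D, norm_nonneg ((n-1) • a + c)]

section Steps

variable {d N : ℕ} (x : Fin N → EuclideanSpace ℝ (Fin d))

lemma newW_cast (w : Fin N → ℕ) (ℓ k : Fin N) (hkl : k ≠ ℓ) (hk : 0 < w k) (j : Fin N) :
    (((w j + (if j = ℓ then 1 else 0) - (if j = k then 1 else 0) : ℕ)) : ℝ)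
      = (w j : ℝ) + (if j = ℓ then (1:ℝ) else 0) - (if j = k then (1:ℝ) else 0) := by
  by_cases hjk : j = k
  · subst hjk
    simp [if_neg hkl, Nat.cast_sub hk]
  · simp [hjk]

lemma newW_sum (w : Fin N → ℕ) (hw : ∑ i, w i = N) (ℓ k : Fin N) (hkl : k ≠ ℓ)
    (hk : 0 < w k) :
    ∑ j, (w j + (if j = ℓ then 1 else 0) - (if j = k then 1 else 0)) = N := by
  have : ((∑ j, (w j + (if j = ℓ then 1 else 0) - (if j = k then 1 else 0)) : ℕ) : ℝ)
      = (N : ℝ) := by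
    push_cast [newW_cast w ℓ k hkl hk]
    rw [Finset.sum_sub_distrib, Finset.sum_add_distrib, ← Nat.cast_sum, hw]
    simp
  exact_mod_cast this

lemma newW_vecsum (w : Fin N → ℕ) (ℓ k : Fin N) (hkl : k ≠ ℓ) (hk : 0 < w k) :
    ∑ j, (((w j + (if j = ℓ then 1 else 0) - (if j = k then 1 else 0) : ℕ)) : ℝ) • x j
      = (∑ j, (w j : ℝ) • x j) + x ℓ - x k := by
  rw [Finset.sum_congr rfl (fun j _ => by
    rw [newW_cast w ℓ k hkl hk j, sub_smul, add_smul])]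
  rw [Finset.sum_sub_distrib, Finset.sum_add_distrib]
  simp [ite_smul]

lemma newW_bary (w : Fin N → ℕ) (ℓ k : Fin N) (hkl : k ≠ ℓ) (hk : 0 < w k) :
    stmtBary x (fun j => w j + (if j = ℓ then 1 else 0) - (if j = k then 1 else 0))
      = stmtBary x w + ((N:ℝ))⁻¹ • (x ℓ - x k) := by
  rw [stmtBary, stmtBary, newW_vecsum x w ℓ k hkl hk]
  rw [add_sub_assoc, smul_add]

/-- After the step at `ℓ` killing `k`, the site `k` is still at least as far from the
new barycenter as `ℓ` is. -/
lemma step_new_witness (hN : 0 < N) (w : Fin N → ℕ) (ℓ k : Fin N) (hkl : k ≠ ℓ)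
    (hℓ : 0 < w ℓ) (hk : IsKilled x w ℓ k) :
    ‖x ℓ - stmtBary x (fun j => w j + (if j = ℓ then 1 else 0) - (if j = k then 1 else 0))‖
      ≤ ‖x k - stmtBary x (fun j => w j + (if j = ℓ then 1 else 0) - (if j = k then 1 else 0))‖ := by
  have hn : (1:ℝ) ≤ N := by exact_mod_cast hN
  set a := x ℓ - stmtBary x w with ha
  set c := x k - stmtBary x w with hc
  have hyp : ‖a - ((N:ℝ)+1)⁻¹ • a‖ ≤ ‖c - ((N:ℝ)+1)⁻¹ • a‖ := by
    have h1 := hk.2 ℓ hℓ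
    rwa [sub_branchBary hN x w ℓ ℓ, sub_branchBary hN x w ℓ k] at h1
  have hb := newW_bary x w ℓ k hkl hk.1
  have e1 : x ℓ - stmtBary x (fun j => w j + (if j = ℓ then 1 else 0) - (if j = k then 1 else 0))
      = a - ((N:ℝ))⁻¹ • (a - c) := by
    rw [hb, ha, hc]
    have : x ℓ - stmtBary x w - (x k - stmtBary x w) = x ℓ - x k := by abel
    rw [this]
    abel
  have e2 : x k - stmtBary x (fun j => w j + (if j = ℓ then 1 else 0) - (if j = k then 1 else 0))
      = c - ((N:ℝ))⁻¹ • (a - c) := by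
    rw [hb, ha, hc]
    have : x ℓ - stmtBary x w - (x k - stmtBary x w) = x ℓ - x k := by abel
    rw [this]
    abel
  rw [e1, e2]
  exact key_geom a c (N:ℝ) hn hyp

end Steps

lemma phase {d N : ℕ} (hN : 0 < N) (x : Fin N → EuclideanSpace ℝ (Fin d))
    (hU : Unambiguous x) :
    ∀ T : ℕ, ∀ w : Fin N → ℕ, ∀ ℓ : Fin N, (∑ i, w i = N) → 0 < w ℓ → N ≤ w ℓ + T →
    (∃ j, j ≠ ℓ ∧ 0 < w j ∧ ‖x ℓ - stmtBary x w‖ ≤ ‖x j - stmtBary x w‖) →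
    ∃ m ≤ T, ∃ ℓs : ℕ → Fin N, ∃ ws : ℕ → Fin N → ℕ, ws 0 = w ∧
      (∀ i < m, Step x (ws i) (ℓs i) (ws (i+1))) ∧ (∑ i, ws m i = N) ∧
      suppCard (ws m) < suppCard w := by
  intro T
  induction T with
  | zero =>
    intro w ℓ hw hℓ hT ⟨j, hjℓ, hjw, _⟩
    exfalso
    have hle : w ℓ + w j ≤ ∑ i, w i := by
      have : ∑ i ∈ ({ℓ, j} : Finset (Fin N)), w i ≤ ∑ i, w i :=
        Finset.sum_le_sum_of_subset (Finset.subset_univ _)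
      rwa [Finset.sum_pair (Ne.symm hjℓ)] at this
    omega
  | succ T ih =>
    intro w ℓ hw hℓ hT ⟨j, hjℓ, hjw, hwit⟩
    obtain ⟨k, hk, hkl⟩ := exists_kill hN x hU w hw ℓ hℓ j hjℓ hjw hwit
    set w' : Fin N → ℕ :=
      fun j => w j + (if j = ℓ then 1 else 0) - (if j = k then 1 else 0) with hw'def
    have hstep : Step x w ℓ w' := ⟨hℓ, k, hk, rfl⟩
    have hk1 : 0 < w k := hk.1
    have hw' : ∑ i, w' i = N := newW_sum w hw ℓ k hkl hk1
    have hlk : ℓ ≠ k := fun h => hkl h.symm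
    have ewℓ : w' ℓ = w ℓ + 1 := by simp [hw'def, hlk]
    have ewk : w' k = w k - 1 := by simp [hw'def, hkl]
    have hw'ℓ : 0 < w' ℓ := by omega
    by_cases hwk : w k = 1
    · -- the killed site dies: the support shrinks, stop here
      have hsupp : (Finset.univ.filter fun i => 0 < w' i)
          = (Finset.univ.filter fun i => 0 < w i).erase k := by
        ext i
        simp only [Finset.mem_filter, Finset.mem_erase, Finset.mem_univ, true_and]
        by_cases hik : i = k
        · subst hik
          simp [ewk, hwk]
        · by_cases hiℓ : i = ℓ
          · subst hiℓ
            simp [ewℓ, hlk, hℓ]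
          · have e : w' i = w i := by simp [hw'def, hik, hiℓ]
            simp [e, hik]
      have hcard : suppCard w' < suppCard w := by
        rw [suppCard, suppCard, hsupp]
        apply Finset.card_erase_lt_of_mem
        simp only [Finset.mem_filter, Finset.mem_univ, true_and]
        exact hk1
      exact ⟨1, by omega, fun _ => ℓ, fun i => if i = 0 then w else w', by simp,
        fun i hi => by
          interval_cases i
          simpa using hstep,
        by simpa using hw', by simpa using hcard⟩
    · -- the killed site survives: same support, recurse
      have hwk2 : 2 ≤ w k := by omega
      have hw'k : 0 < w' k := by omega
      have hwitness' : ‖x ℓ - stmtBary x w'‖ ≤ ‖x k - stmtBary x w'‖ :=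
        step_new_witness x hN w ℓ k hkl hℓ hk
      have hT' : N ≤ w' ℓ + T := by omega
      obtain ⟨m', hm', ℓs', ws', h0', hstep', hsum', hsupp'⟩ :=
        ih w' ℓ hw' hw'ℓ hT' ⟨k, hkl, hw'k, hwitness'⟩
      have hsuppeq : suppCard w' = suppCard w := by
        rw [suppCard, suppCard]
        congr 1
        ext i
        simp only [Finset.mem_filter, Finset.mem_univ, true_and]
        by_cases hik : i = k
        · subst hik
          rw [ewk]
          omega
        · by_cases hiℓ : i = ℓ
          · subst hiℓ
            rw [ewℓ]
            omega
          · have e : w' i = w i := by simp [hw'def, hik, hiℓ]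
            rw [e]
      refine ⟨m' + 1, by omega, fun i => if i = 0 then ℓ else ℓs' (i - 1),
        fun i => if i = 0 then w else ws' (i - 1), by simp, ?_, ?_, ?_⟩
      · intro i hi
        match i with
        | 0 =>
          simpa [h0'] using hstep
        | (j + 1) =>
          have hj : j < m' := by omega
          simpa using hstep' j hj
      · simpa using hsum'
      · simp only [Nat.add_eq_zero, if_neg (by omega : ¬ m' + 1 = 0)]
        simpa using lt_of_lt_of_eq hsupp' hsuppeq

lemma concat_seq {d N : ℕ} (x : Fin N → EuclideanSpace ℝ (Fin d))
    (m₁ m₂ : ℕ) (ℓs₁ ℓs₂ : ℕ → Fin N) (ws₁ ws₂ : ℕ → Fin N → ℕ)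
    (h₁ : ∀ i < m₁, Step x (ws₁ i) (ℓs₁ i) (ws₁ (i+1)))
    (h₂ : ∀ i < m₂, Step x (ws₂ i) (ℓs₂ i) (ws₂ (i+1)))
    (hlink : ws₂ 0 = ws₁ m₁) :
    ∃ ℓs : ℕ → Fin N, ∃ ws : ℕ → Fin N → ℕ, ws 0 = ws₁ 0 ∧
      (∀ i < m₁ + m₂, Step x (ws i) (ℓs i) (ws (i+1))) ∧
      ws (m₁ + m₂) = ws₂ m₂ := by
  refine ⟨fun i => if i < m₁ then ℓs₁ i else ℓs₂ (i - m₁),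
    fun i => if i ≤ m₁ then ws₁ i else ws₂ (i - m₁), ?_, ?_, ?_⟩
  · simp [Nat.zero_le]
  · intro i hi
    by_cases h : i < m₁
    · have h1 : i ≤ m₁ := le_of_lt h
      have h2 : i + 1 ≤ m₁ := h
      simp only [if_pos h, if_pos h1, if_pos h2]
      exact h₁ i h
    · push_neg at h
      have e1 : (if i ≤ m₁ then ws₁ i else ws₂ (i - m₁)) = ws₂ (i - m₁) := by
        by_cases h' : i ≤ m₁
        · have : i = m₁ := le_antisymm h' h
          subst this
          rw [if_pos h', Nat.sub_self, hlink]
        · rw [if_neg h']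
      have e2 : (if i + 1 ≤ m₁ then ws₁ (i+1) else ws₂ (i + 1 - m₁))
          = ws₂ ((i - m₁) + 1) := by
        rw [if_neg (show ¬ (i + 1 ≤ m₁) by omega)]
        have e : i + 1 - m₁ = i - m₁ + 1 := by omega
        rw [e]
      simp only [if_neg (not_lt.mpr h)]
      rw [e1, e2]
      exact h₂ (i - m₁) (by omega)
  · by_cases h : m₂ = 0
    · subst h
      simp only [Nat.add_zero, if_pos le_rfl]
      exact hlink.symm
    · show (if m₁ + m₂ ≤ m₁ then ws₁ (m₁ + m₂) else ws₂ (m₁ + m₂ - m₁)) = ws₂ m₂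
      rw [if_neg (show ¬ (m₁ + m₂ ≤ m₁) by omega)]
      have e : m₁ + m₂ - m₁ = m₂ := by omega
      rw [e]

lemma main_lemma {d N : ℕ} (hN : 0 < N) (x : Fin N → EuclideanSpace ℝ (Fin d))
    (hU : Unambiguous x) :
    ∀ s : ℕ, ∀ w : Fin N → ℕ, (∑ i, w i = N) → suppCard w ≤ s →
    ∃ m ≤ (s - 1) * (N - 1), ∃ ℓs : ℕ → Fin N, ∃ ws : ℕ → Fin N → ℕ, ws 0 = w ∧
      (∀ i < m, Step x (ws i) (ℓs i) (ws (i+1))) ∧ ∃! j : Fin N, ws m j ≠ 0 := by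
  intro s
  induction s with
  | zero =>
    intro w hw hs
    exfalso
    have : ∀ j, w j = 0 := by
      intro j
      by_contra hj
      have : j ∈ Finset.univ.filter fun i => 0 < w i := by
        simp [Nat.pos_of_ne_zero hj]
      have hcard : 0 < suppCard w := Finset.card_pos.mpr ⟨j, this⟩
      omega
    rw [Finset.sum_congr rfl (fun i _ => this i)] at hw
    simp at hw
    omega
  | succ s ih =>
    intro w hw hs
    -- there is at least one occupied site
    have hx : ∃ j0, 0 < w j0 := by
      by_contra hc
      push_neg at hc
      have : ∀ j ∈ Finset.univ, w j = 0 := fun j _ => by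
        have := hc j; omega
      rw [Finset.sum_congr rfl this] at hw
      simp at hw
      omega
    obtain ⟨j0, hj0⟩ := hx
    have hj0mem : j0 ∈ Finset.univ.filter fun i => 0 < w i := by simp [hj0]
    by_cases h1 : suppCard w ≤ 1
    · -- single occupied site: done with zero steps
      have hcard1 : suppCard w = 1 := by
        have : 0 < suppCard w := Finset.card_pos.mpr ⟨j0, hj0mem⟩
        omega
      obtain ⟨a, ha⟩ := Finset.card_eq_one.mp hcard1
      refine ⟨0, Nat.zero_le _, fun _ => j0, fun _ => w, rfl,
        fun i hi => absurd hi (Nat.not_lt_zero i), a, ?_, ?_⟩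
      · have : a ∈ Finset.univ.filter fun i => 0 < w i := by
          rw [ha]; exact Finset.mem_singleton_self a
        simp only [Finset.mem_filter] at this
        exact this.2.ne'
      · intro j hj
        have : j ∈ Finset.univ.filter fun i => 0 < w i := by
          simp [Nat.pos_of_ne_zero hj]
        rw [ha] at this
        exact Finset.mem_singleton.mp this
    · -- at least two occupied sites
      push_neg at h1
      -- choose ℓ as the occupied site closest to the barycenter
      obtain ⟨ℓ, hℓmem, hℓmin⟩ := Finset.exists_min_image
        (Finset.univ.filter fun i => 0 < w i) (fun i => ‖x i - stmtBary x w‖)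
        ⟨j0, hj0mem⟩
      have hℓ : 0 < w ℓ := by simpa using hℓmem
      obtain ⟨j, hjmem, hjne⟩ := Finset.exists_mem_ne h1 ℓ
      have hjw : 0 < w j := by simpa using hjmem
      have hwit : ‖x ℓ - stmtBary x w‖ ≤ ‖x j - stmtBary x w‖ := hℓmin j hjmem
      have hT : N ≤ w ℓ + (N - 1) := by omega
      obtain ⟨m₁, hm₁, ℓs₁, ws₁, h0₁, hstep₁, hsum₁, hsupp₁⟩ :=
        phase hN x hU (N - 1) w ℓ hw hℓ hT ⟨j, hjne, hjw, hwit⟩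
      have hsupp₂ : suppCard (ws₁ m₁) ≤ s := by omega
      obtain ⟨m₂, hm₂, ℓs₂, ws₂, h0₂, hstep₂, huniq⟩ := ih (ws₁ m₁) hsum₁ hsupp₂
      obtain ⟨ℓs, ws, h0, hstep, hfin⟩ :=
        concat_seq x m₁ m₂ ℓs₁ ℓs₂ ws₁ ws₂ hstep₁ hstep₂ h0₂
      refine ⟨m₁ + m₂, ?_, ℓs, ws, by rw [h0, h0₁], hstep, by rw [hfin]; exact huniq⟩
      have hs1 : 1 ≤ s := by omega
      obtain ⟨t, rfl⟩ : ∃ t, s = t + 1 := ⟨s - 1, by omega⟩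
      have hmul : (t + 1) * (N - 1) = t * (N - 1) + (N - 1) := by
        rw [Nat.succ_mul]
      simp only [Nat.add_sub_cancel] at hm₂ ⊢
      omega

theorem stmt14 {d N : ℕ} (hN : 0 < N) (x : Fin N → EuclideanSpace ℝ (Fin d))
    (w : Fin N → ℕ) (hw : ∑ i, w i = N) (hU : Unambiguous x) :
    ∃ m ≤ (N - 1) ^ 2, ∃ ℓs : ℕ → Fin N, ∃ ws : ℕ → Fin N → ℕ,
      ws 0 = w ∧ (∀ i < m, Step x (ws i) (ℓs i) (ws (i + 1))) ∧
        ∃! j : Fin N, ws m j ≠ 0 := by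
  have hsupp : suppCard w ≤ N := by
    rw [suppCard]
    calc (Finset.univ.filter fun j => 0 < w j).card
        = ∑ _j ∈ (Finset.univ.filter fun j => 0 < w j), 1 := by
          rw [Finset.card_eq_sum_ones]
      _ ≤ ∑ j ∈ (Finset.univ.filter fun j => 0 < w j), w j := by
          apply Finset.sum_le_sum
          intro i hi
          simp only [Finset.mem_filter] at hi
          omega
      _ ≤ ∑ j, w j := Finset.sum_le_sum_of_subset (Finset.filter_subset _ _)
      _ = N := hw
  obtain ⟨m, hm, ℓs, ws, h0, hstep, huniq⟩ := main_lemma hN x hU N w hw hsupp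
  exact ⟨m, by rw [pow_two]; exact hm, ℓs, ws, h0, hstep, huniq⟩
end

section
/- Fix an unambiguous configuration $(x,w)$ and an index $\ell$ with $w_\ell > 0$. Let $k = k(x,w,\ell)$ be the killed index and $w^* = g(x,w,\ell)$ the updated weights. If $w^*_k \ge 1$ and $k \neq \ell$, then $k(x, w^*, \ell) \neq \ell$. -/
open Finset

lemma key_shift {E : Type*} [NormedAddCommGroup E] [InnerProductSpace ℝ E]
    (u v : E) (c : ℝ) (hc : 0 < c) (h : ‖u‖ < ‖v‖) :
    ‖u - c • (u - v)‖ < ‖v - c • (u - v)‖ := by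
  have hsq : ‖u - c • (u - v)‖ ^ 2 < ‖v - c • (u - v)‖ ^ 2 := by
    have h1 := @norm_sub_sq_real E _ _ u (c • (u - v))
    have h2 := @norm_sub_sq_real E _ _ v (c • (u - v))
    have h3 : inner ℝ u (c • (u - v)) - inner ℝ v (c • (u - v)) = c * ‖u - v‖ ^ 2 := by
      rw [real_inner_smul_right, real_inner_smul_right, ← mul_sub,
        ← inner_sub_left, real_inner_self_eq_norm_sq]
    have hn : (0:ℝ) ≤ ‖u - v‖ ^ 2 := sq_nonneg _
    have hu : (0:ℝ) ≤ ‖u‖ := norm_nonneg _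
    nlinarith
  have := norm_nonneg (v - c • (u - v))
  nlinarith [norm_nonneg (u - c • (u - v))]

theorem stmt15 {d N : ℕ} (x : Fin N → EuclideanSpace ℝ (Fin d)) (w : Fin N → ℕ)
    (hw : ∑ i, w i = N) (hU : Unambiguous x) (ℓ k : Fin N) (hℓ : 0 < w ℓ)
    (hk : IsKilled x w ℓ k) (hkℓ : k ≠ ℓ)
    (wstar : Fin N → ℕ)
    (hws : wstar = fun j => w j + (if j = ℓ then 1 else 0) - (if j = k then 1 else 0))
    (hwk : 1 ≤ wstar k)
    (k' : Fin N) (hk' : IsKilled x wstar ℓ k') :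
    k' ≠ ℓ := by
  set b := branchBary x w ℓ with hb
  set b2 := branchBary x wstar ℓ with hb2
  set c : ℝ := ((N : ℝ) + 1)⁻¹ with hc
  have hcpos : 0 < c := by positivity
  have hwk2 : 2 ≤ w k := by
    have : wstar k = w k - 1 := by simp [hws, hkℓ]
    omega
  -- cast of wstar
  have hcast : ∀ i, (wstar i : ℝ)
      = (w i : ℝ) + (if i = ℓ then 1 else 0) - (if i = k then 1 else 0) := by
    intro i
    rcases eq_or_ne i k with rfl | hik
    · have h1 : wstar i = w i - 1 := by simp [hws, hkℓ]
      rw [h1, Nat.cast_sub (by omega : 1 ≤ w i), if_neg hkℓ, if_pos rfl]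
      push_cast; ring
    · rcases eq_or_ne i ℓ with rfl | hil
      · have h1 : wstar i = w i + 1 := by simp [hws, hik]
        rw [h1, if_pos rfl, if_neg hik]; push_cast; ring
      · have h1 : wstar i = w i := by simp [hws, hik, hil]
        rw [h1, if_neg hil, if_neg hik]; ring
  have hsum : (∑ i, (wstar i : ℝ) • x i) = (∑ i, (w i : ℝ) • x i) + x ℓ - x k := by
    have : ∀ i, (wstar i : ℝ) • x i
        = (w i : ℝ) • x i + (if i = ℓ then x ℓ else 0) - (if i = k then x k else 0) := by
      intro i
      rw [hcast i]
      rcases eq_or_ne i ℓ with rfl | h1 <;> rcases eq_or_ne i k with rfl | h2 <;>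
        simp_all [add_smul, sub_smul]
    rw [Finset.sum_congr rfl (fun i _ => this i)]
    rw [Finset.sum_sub_distrib, Finset.sum_add_distrib]
    simp
  have hb2eq : b2 = b + c • (x ℓ - x k) := by
    rw [hb2, hb, branchBary, branchBary, hsum, ← hc]
    rw [← smul_add]
    congr 1
    abel
  -- strict inequality in old configuration
  have hle : ‖x ℓ - b‖ ≤ ‖x k - b‖ := hk.2 ℓ hℓ
  have hne : ‖x ℓ - b‖ ≠ ‖x k - b‖ := by
    have hf : (∑ i, (fun j => w j + if j = ℓ then 1 else 0) i) = N + 1 := by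
      simp [Finset.sum_add_distrib, hw]
    have hbary : ((N : ℝ) + 1)⁻¹ • ∑ i, (((fun j => w j + if j = ℓ then 1 else 0) i : ℕ) : ℝ) • x i = b := by
      rw [hb, branchBary]
      congr 1
      have : ∀ i, (((w i + if i = ℓ then 1 else 0 : ℕ)) : ℝ) • x i
          = (w i : ℝ) • x i + (if i = ℓ then x ℓ else 0) := by
        intro i
        rcases eq_or_ne i ℓ with rfl | h1 <;> simp_all [add_smul]
      rw [Finset.sum_congr rfl (fun i _ => this i), Finset.sum_add_distrib]
      simp
    have := hU _ hf ℓ k (Ne.symm hkℓ)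
    rwa [hbary] at this
  have hlt : ‖x ℓ - b‖ < ‖x k - b‖ := lt_of_le_of_ne hle hne
  -- geometric step
  have hkey : ‖x ℓ - b2‖ < ‖x k - b2‖ := by
    have hconv : (x ℓ - b) - (x k - b) = x ℓ - x k := by abel
    have h1 : x ℓ - b2 = (x ℓ - b) - c • ((x ℓ - b) - (x k - b)) := by
      rw [hconv, hb2eq]; abel
    have h2 : x k - b2 = (x k - b) - c • ((x ℓ - b) - (x k - b)) := by
      rw [hconv, hb2eq]; abel
    rw [h1, h2]
    exact key_shift _ _ _ hcpos hlt
  -- conclusion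
  intro hcon
  have hkpos : 0 < wstar k := hwk
  have := hk'.2 k hkpos
  rw [hcon] at this
  exact absurd this (not_le.mpr hkey)
end

section
/- Let $N \ge 3$, $r_N = \frac{1}{4(N+1)}$, and $\gamma = 0$ if $N$ is odd, $\gamma = -\frac{5}{N-1}e_1$ if $N$ is even. Suppose $x \in (\mathbb{R}^d)^N$ admits a partition $[N] = G \sqcup C \sqcup D$ with $C \neq \emptyset$, $G \sqcup D \neq \emptyset$, $x_i \in B(\gamma, 2r_N)$ for $i \in C$, $x_j \in B(-5e_1, 2r_N)$ for $j \in G$, $x_j \in B(5e_1, 2r_N)$ for $j \in D$, $|G \cup C| \ge \lceil (N-1)/2 \rceil + 1$, and $|D \cup C| \ge \lfloor (N-1)/2 \rfloor + 1$. Then for any $\ell \in C$, letting $\bar{x}^{N+1} = \frac{1}{N+1}(\sum_{i=1}^N x_i + x_\ell)$, the index maximizing $|x_j - \bar{x}^{N+1}|$ over $j \in [N]$ lies in $G \sqcup D$. -/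
open Finset
set_option maxHeartbeats 1000000 in
lemma key_ineq (N g c dd : ℕ) (hN : 3 ≤ N) (hsum : g + c + dd = N) (hc : 1 ≤ c)
    (h1 : N / 2 + 1 ≤ g + c) (h2 : (N - 1) / 2 + 1 ≤ dd + c)
    (γ₁ μ : ℝ)
    (hγ₁ : γ₁ = if N % 2 = 1 then 0 else -5 / ((N : ℝ) - 1))
    (hμ : ((N : ℝ) + 1) * μ = 5 * dd - 5 * g + ((c : ℝ) + 1) * γ₁)
    (σ : ℝ) (hσ : σ = 1 ∨ (σ = -1 ∧ dd = 0 ∧ 1 ≤ g)) :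
    |γ₁ - μ| + 2 / ((N : ℝ) + 1) ≤ |5 * σ - μ| := by
  have hn : (3 : ℝ) ≤ (N : ℝ) := by exact_mod_cast hN
  have hn1 : (0 : ℝ) < (N : ℝ) + 1 := by linarith
  have hnm1 : (0 : ℝ) < (N : ℝ) - 1 := by linarith
  have hcr : (1 : ℝ) ≤ (c : ℝ) := by exact_mod_cast hc
  have hsr : (g : ℝ) + c + dd = N := by exact_mod_cast hsum
  have hg0 : (0 : ℝ) ≤ (g : ℝ) := Nat.cast_nonneg g
  have hd0 : (0 : ℝ) ≤ (dd : ℝ) := Nat.cast_nonneg dd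
  have ht1 : 2 / ((N : ℝ) + 1) ≤ 1 := by
    rw [div_le_one hn1]; linarith
  rcases Nat.even_or_odd N with he | ho
  all_goals rcases hσ with hσ1 | ⟨hσ1, hdd0, hg1⟩
  · -- N even, σ = 1
    have he' : N % 2 = 0 := Nat.even_iff.mp he
    have hmod : N % 2 ≠ 1 := by omega
    have hN4 : 4 ≤ N := by omega
    have hn4 : (4 : ℝ) ≤ (N : ℝ) := by exact_mod_cast hN4
    have hγ : γ₁ = -5 / ((N : ℝ) - 1) := by rw [hγ₁, if_neg hmod]
    have hγe : ((N : ℝ) - 1) * γ₁ = -5 := by rw [hγ]; field_simp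
    have hγneg : γ₁ < 0 := by nlinarith [hγe, hnm1]
    have hγlb : -5/3 ≤ γ₁ := by nlinarith [hγe, hnm1, hn4]
    have hdN : 2 * dd + 2 ≤ N := by omega
    have hdub : 2 * (dd : ℝ) + 2 ≤ (N : ℝ) := by exact_mod_cast hdN
    have hcγ : (c : ℝ) * γ₁ ≤ 0 := mul_nonpos_of_nonneg_of_nonpos (by linarith) hγneg.le
    subst hσ1
    have hmle : μ ≤ 5 := by nlinarith [hμ, hcγ, hγneg.le, hdub, hg0, hn1]
    rw [abs_of_nonneg (by linarith : (0:ℝ) ≤ 5 * 1 - μ)]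
    rcases abs_cases (γ₁ - μ) with ⟨habs, _⟩ | ⟨habs, _⟩ <;> rw [habs]
    · linarith
    · have key : 2 / ((N : ℝ) + 1) ≤ 5 + γ₁ - 2 * μ := by
        rw [div_le_iff₀ hn1]
        nlinarith [hμ, hγe, hcγ, hdub, hg0]
      linarith
  · -- N even, σ = -1, dd = 0, g ≥ 1
    have he' : N % 2 = 0 := Nat.even_iff.mp he
    have hmod : N % 2 ≠ 1 := by omega
    have hN4 : 4 ≤ N := by omega
    have hn4 : (4 : ℝ) ≤ (N : ℝ) := by exact_mod_cast hN4
    have hγ : γ₁ = -5 / ((N : ℝ) - 1) := by rw [hγ₁, if_neg hmod]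
    have hγe : ((N : ℝ) - 1) * γ₁ = -5 := by rw [hγ]; field_simp
    have hγneg : γ₁ < 0 := by nlinarith [hγe, hnm1]
    have hγlb : -5/3 ≤ γ₁ := by nlinarith [hγe, hnm1, hn4]
    have hgN : 2 * g ≤ N := by omega
    have hgub : 2 * (g : ℝ) ≤ (N : ℝ) := by exact_mod_cast hgN
    have hdd0' : (dd : ℝ) = 0 := by exact_mod_cast hdd0
    have hcg : (c : ℝ) = (N : ℝ) - g := by linarith
    subst hσ1
    have hμ2 : ((N:ℝ) - 1) * (((N:ℝ) + 1) * μ) =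
        -5 * g * ((N:ℝ) - 1) - 5 * ((c:ℝ) + 1) := by
      rw [hμ, hdd0']; linear_combination ((c:ℝ) + 1) * hγe
    have hprod : 0 ≤ ((N:ℝ) - 2 * g) * ((N:ℝ) - 2) := by
      apply mul_nonneg <;> linarith
    have hmge : -5 ≤ μ := by
      nlinarith [hμ2, hcg, hprod, mul_pos hn1 hnm1, hn, sq_nonneg ((N:ℝ) - 3)]
    rw [show (5:ℝ) * (-1) - μ = -(5 + μ) by ring, abs_neg,
      abs_of_nonneg (by linarith : (0:ℝ) ≤ 5 + μ)]
    rcases abs_cases (γ₁ - μ) with ⟨habs, _⟩ | ⟨habs, _⟩ <;> rw [habs]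
    · have hγe2 : ((N:ℝ) - 1) * (((N:ℝ) + 1) * γ₁) = -5 * ((N:ℝ) + 1) := by
        linear_combination ((N:ℝ) + 1) * hγe
      have key : 2 / ((N : ℝ) + 1) ≤ 5 + 2 * μ - γ₁ := by
        rw [div_le_iff₀ hn1, ← mul_le_mul_iff_of_pos_right hnm1]
        nlinarith [hμ2, hγe2, hcg, hprod, hn4]
      linarith
    · linarith
  · -- N odd, σ = 1
    have hmod : N % 2 = 1 := Nat.odd_iff.mp ho
    have hγ : γ₁ = 0 := by rw [hγ₁, if_pos hmod]
    subst hγ hσ1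
    have hdN : 2 * dd + 1 ≤ N := by omega
    have hdub : 2 * (dd : ℝ) + 1 ≤ (N : ℝ) := by exact_mod_cast hdN
    have hmle : μ ≤ 5 := by nlinarith [hμ, hdub, hg0, hn1]
    rw [abs_of_nonneg (by linarith : (0:ℝ) ≤ 5 * 1 - μ)]
    rcases abs_cases ((0:ℝ) - μ) with ⟨habs, _⟩ | ⟨habs, _⟩ <;> rw [habs]
    · linarith
    · have key : 2 / ((N : ℝ) + 1) ≤ 5 - 2 * μ + 0 := by
        rw [div_le_iff₀ hn1]
        nlinarith [hμ, hdub, hg0]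
      linarith
  · -- N odd, σ = -1, dd = 0, g ≥ 1
    have hmod : N % 2 = 1 := Nat.odd_iff.mp ho
    have hγ : γ₁ = 0 := by rw [hγ₁, if_pos hmod]
    subst hγ hσ1
    have hgN : 2 * g + 1 ≤ N := by omega
    have hgub : 2 * (g : ℝ) + 1 ≤ (N : ℝ) := by exact_mod_cast hgN
    have hdd0' : (dd : ℝ) = 0 := by exact_mod_cast hdd0
    have hmge : -5 ≤ μ := by nlinarith [hμ, hgub, hdd0', hn1]
    rw [show (5:ℝ) * (-1) - μ = -(5 + μ) by ring, abs_neg,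
      abs_of_nonneg (by linarith : (0:ℝ) ≤ 5 + μ)]
    rcases abs_cases ((0:ℝ) - μ) with ⟨habs, _⟩ | ⟨habs, _⟩ <;> rw [habs]
    · have key : 2 / ((N : ℝ) + 1) ≤ 5 + 2 * μ - 0 := by
        rw [div_le_iff₀ hn1]
        nlinarith [hμ, hgub, hdd0']
      linarith
    · linarith

set_option maxHeartbeats 1000000 in

theorem stmt16 {d N : ℕ} (hd : 0 < d) (hN : 3 ≤ N)
    (x : Fin N → EuclideanSpace ℝ (Fin d))
    (G C D : Finset (Fin N))
    (hpart : G ∪ C ∪ D = Finset.univ)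
    (hGC : Disjoint G C) (hGD : Disjoint G D) (hCD : Disjoint C D)
    (hCne : C.Nonempty) (hGDne : (G ∪ D).Nonempty)
    (e1 γ : EuclideanSpace ℝ (Fin d))
    (he1 : e1 = EuclideanSpace.single (⟨0, hd⟩ : Fin d) (1 : ℝ))
    (hγ : γ = if N % 2 = 1 then 0 else (-5 / ((N : ℝ) - 1)) • e1)
    (rN : ℝ) (hrN : rN = 1 / (4 * ((N : ℝ) + 1)))
    (hC : ∀ i ∈ C, x i ∈ Metric.ball γ (2 * rN))
    (hG : ∀ j ∈ G, x j ∈ Metric.ball ((-5 : ℝ) • e1) (2 * rN))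
    (hD : ∀ j ∈ D, x j ∈ Metric.ball ((5 : ℝ) • e1) (2 * rN))
    (hcard1 : N / 2 + 1 ≤ (G ∪ C).card)
    (hcard2 : (N - 1) / 2 + 1 ≤ (D ∪ C).card) :
    ∀ ℓ ∈ C, ∀ j : Fin N,
      (∀ i : Fin N,
          ‖x i - ((N : ℝ) + 1)⁻¹ • ((∑ i', x i') + x ℓ)‖ ≤
            ‖x j - ((N : ℝ) + 1)⁻¹ • ((∑ i', x i') + x ℓ)‖) →
        j ∈ G ∪ D := by
  have hn : (3 : ℝ) ≤ (N : ℝ) := by exact_mod_cast hN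
  have hn1 : (0 : ℝ) < (N : ℝ) + 1 := by linarith
  have hrN0 : 0 < rN := by rw [hrN]; positivity
  have he1n : ‖e1‖ = 1 := by rw [he1, EuclideanSpace.norm_single]; norm_num
  -- cards
  have hsum : G.card + C.card + D.card = N := by
    have h := congrArg Finset.card hpart
    rwa [card_union_of_disjoint (Finset.disjoint_union_left.mpr ⟨hGD, hCD⟩),
      card_union_of_disjoint hGC, card_univ, Fintype.card_fin] at h
  have hc1 : 1 ≤ C.card := Finset.card_pos.mpr hCne
  have hcard1' : N / 2 + 1 ≤ G.card + C.card := by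
    rwa [card_union_of_disjoint hGC] at hcard1
  have hcard2' : (N - 1) / 2 + 1 ≤ D.card + C.card := by
    rwa [card_union_of_disjoint hCD.symm] at hcard2
  -- gamma as multiple of e1
  set γ₁ : ℝ := if N % 2 = 1 then 0 else -5 / ((N : ℝ) - 1) with hγ₁
  have hγγ : γ = γ₁ • e1 := by
    rw [hγ, hγ₁]; split_ifs <;> simp
  intro ℓ hℓ j hj
  set b := ((N : ℝ) + 1)⁻¹ • ((∑ i', x i') + x ℓ) with hb
  set μ : ℝ := (5 * D.card - 5 * G.card + ((C.card : ℝ) + 1) * γ₁) / ((N : ℝ) + 1) with hμdef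
  have hμeq : ((N : ℝ) + 1) * μ = 5 * D.card - 5 * G.card + ((C.card : ℝ) + 1) * γ₁ := by
    rw [hμdef]; field_simp
  -- sum decomposition
  have huniv : (∑ i', x i') = (∑ i ∈ G, x i) + (∑ i ∈ C, x i) + (∑ i ∈ D, x i) := by
    rw [← hpart, Finset.sum_union (Finset.disjoint_union_left.mpr ⟨hGD, hCD⟩),
      Finset.sum_union hGC]
  have eG : (∑ i ∈ G, (x i - (-5 : ℝ) • e1)) = (∑ i ∈ G, x i) - (G.card : ℝ) • ((-5:ℝ) • e1) := by
    rw [Finset.sum_sub_distrib, Finset.sum_const, Nat.cast_smul_eq_nsmul]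
  have eC : (∑ i ∈ C, (x i - γ)) = (∑ i ∈ C, x i) - (C.card : ℝ) • γ := by
    rw [Finset.sum_sub_distrib, Finset.sum_const, Nat.cast_smul_eq_nsmul]
  have eD : (∑ i ∈ D, (x i - (5 : ℝ) • e1)) = (∑ i ∈ D, x i) - (D.card : ℝ) • ((5:ℝ) • e1) := by
    rw [Finset.sum_sub_distrib, Finset.sum_const, Nat.cast_smul_eq_nsmul]
  have hTW : (∑ i', x i') + x ℓ - (((N : ℝ) + 1) * μ) • e1 =
      (∑ i ∈ G, (x i - (-5 : ℝ) • e1)) + (∑ i ∈ C, (x i - γ)) +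
        (∑ i ∈ D, (x i - (5 : ℝ) • e1)) + (x ℓ - γ) := by
    rw [eG, eC, eD, huniv, hμeq, hγγ]
    module
  -- norm bound on the numerator
  have bndG : ‖∑ i ∈ G, (x i - (-5 : ℝ) • e1)‖ ≤ (G.card : ℝ) * (2 * rN) := by
    refine (norm_sum_le _ _).trans ?_
    rw [← nsmul_eq_mul]
    exact Finset.sum_le_card_nsmul _ _ _ fun i hi =>
      le_of_lt (by simpa [dist_eq_norm] using hG i hi)
  have bndC : ‖∑ i ∈ C, (x i - γ)‖ ≤ (C.card : ℝ) * (2 * rN) := by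
    refine (norm_sum_le _ _).trans ?_
    rw [← nsmul_eq_mul]
    exact Finset.sum_le_card_nsmul _ _ _ fun i hi =>
      le_of_lt (by simpa [dist_eq_norm] using hC i hi)
  have bndD : ‖∑ i ∈ D, (x i - (5 : ℝ) • e1)‖ ≤ (D.card : ℝ) * (2 * rN) := by
    refine (norm_sum_le _ _).trans ?_
    rw [← nsmul_eq_mul]
    exact Finset.sum_le_card_nsmul _ _ _ fun i hi =>
      le_of_lt (by simpa [dist_eq_norm] using hD i hi)
  have bndℓ : ‖x ℓ - γ‖ < 2 * rN := by simpa [dist_eq_norm] using hC ℓ hℓ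
  have hsumr : (G.card : ℝ) + C.card + D.card = N := by exact_mod_cast hsum
  have hnorm : ‖(∑ i', x i') + x ℓ - (((N : ℝ) + 1) * μ) • e1‖ ≤ ((N : ℝ) + 1) * (2 * rN) := by
    rw [hTW]
    calc ‖∑ i ∈ G, (x i - (-5 : ℝ) • e1) + ∑ i ∈ C, (x i - γ) +
          ∑ i ∈ D, (x i - (5 : ℝ) • e1) + (x ℓ - γ)‖
        ≤ ‖∑ i ∈ G, (x i - (-5 : ℝ) • e1) + ∑ i ∈ C, (x i - γ) +
          ∑ i ∈ D, (x i - (5 : ℝ) • e1)‖ + ‖x ℓ - γ‖ := norm_add_le _ _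
      _ ≤ ‖∑ i ∈ G, (x i - (-5 : ℝ) • e1)‖ + ‖∑ i ∈ C, (x i - γ)‖ +
          ‖∑ i ∈ D, (x i - (5 : ℝ) • e1)‖ + ‖x ℓ - γ‖ :=
            add_le_add_left norm_add₃_le _
      _ ≤ ((N : ℝ) + 1) * (2 * rN) := by nlinarith [bndG, bndC, bndD, bndℓ, hrN0]
  -- distance from barycenter to the mean point μ • e1
  have hbb : ‖μ • e1 - b‖ ≤ 2 * rN := by
    have hrw : μ • e1 - b =
        ((N : ℝ) + 1)⁻¹ • ((((N : ℝ) + 1) * μ) • e1 - ((∑ i', x i') + x ℓ)) := by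
      rw [hb, smul_sub, smul_smul, inv_mul_cancel_left₀ (ne_of_gt hn1)]
    rw [hrw, norm_smul, norm_sub_rev]
    rw [Real.norm_eq_abs, abs_of_pos (inv_pos.mpr hn1)]
    calc ((N:ℝ)+1)⁻¹ * ‖(∑ i', x i') + x ℓ - (((N : ℝ) + 1) * μ) • e1‖
        ≤ ((N:ℝ)+1)⁻¹ * (((N : ℝ) + 1) * (2 * rN)) := by
          apply mul_le_mul_of_nonneg_left hnorm (le_of_lt (inv_pos.mpr hn1))
      _ = 2 * rN := by field_simp
  -- now the main argument
  have hjmem : j ∈ G ∪ C ∪ D := hpart ▸ Finset.mem_univ j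
  rcases Finset.mem_union.mp hjmem with hj' | hjD
  rcases Finset.mem_union.mp hj' with hjG | hjC
  · exact Finset.mem_union.mpr (Or.inl hjG)
  swap
  · exact Finset.mem_union.mpr (Or.inr hjD)
  -- j ∈ C : derive contradiction
  exfalso
  -- choose j0 and σ
  obtain ⟨σ, j0, hσor, hj0ball⟩ :
      ∃ (σ : ℝ) (j0 : Fin N), (σ = 1 ∨ (σ = -1 ∧ D.card = 0 ∧ 1 ≤ G.card)) ∧
        ‖x j0 - (5 * σ) • e1‖ < 2 * rN := by
    by_cases hDne : D.Nonempty
    · obtain ⟨j0, hj0⟩ := hDne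
      refine ⟨1, j0, Or.inl rfl, ?_⟩
      have := hD j0 hj0
      rw [Metric.mem_ball, dist_eq_norm] at this
      simpa using this
    · rw [Finset.not_nonempty_iff_eq_empty] at hDne
      have hGne : G.Nonempty := by
        obtain ⟨i, hi⟩ := hGDne
        rcases Finset.mem_union.mp hi with h | h
        · exact ⟨i, h⟩
        · exact absurd h (by simp [hDne])
      obtain ⟨j0, hj0⟩ := hGne
      refine ⟨-1, j0, Or.inr ⟨rfl, by simp [hDne], Finset.card_pos.mpr ⟨j0, hj0⟩⟩, ?_⟩
      have := hG j0 hj0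
      rw [Metric.mem_ball, dist_eq_norm] at this
      have h55 : (5 * (-1) : ℝ) • e1 = (-5 : ℝ) • e1 := by norm_num
      rw [h55]
      exact this
  -- key arithmetic inequality
  have hkey : |γ₁ - μ| + 2 / ((N : ℝ) + 1) ≤ |5 * σ - μ| :=
    key_ineq N G.card C.card D.card hN hsum hc1 hcard1' hcard2' γ₁ μ hγ₁ hμeq σ hσor
  have h8 : 8 * rN = 2 / ((N : ℝ) + 1) := by rw [hrN]; field_simp; ring
  -- distances
  have hxjC : ‖x j - γ‖ < 2 * rN := by simpa [dist_eq_norm] using hC j hjC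
  have hγμ : ‖γ - μ • e1‖ = |γ₁ - μ| := by
    rw [hγγ, ← sub_smul, norm_smul, Real.norm_eq_abs, he1n, mul_one]
  have hσμ : ‖(5 * σ) • e1 - μ • e1‖ = |5 * σ - μ| := by
    rw [← sub_smul, norm_smul, Real.norm_eq_abs, he1n, mul_one]
  have hup : ‖x j - b‖ < |γ₁ - μ| + 4 * rN := by
    calc ‖x j - b‖ = dist (x j) b := (dist_eq_norm _ _).symm
      _ ≤ dist (x j) γ + dist γ (μ • e1) + dist (μ • e1) b := dist_triangle4 _ _ _ _
      _ = ‖x j - γ‖ + ‖γ - μ • e1‖ + ‖μ • e1 - b‖ := by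
          rw [dist_eq_norm, dist_eq_norm, dist_eq_norm]
      _ < 2 * rN + |γ₁ - μ| + 2 * rN := by rw [hγμ]; linarith [hbb, hxjC]
      _ = |γ₁ - μ| + 4 * rN := by ring
  have hlow : |5 * σ - μ| - 4 * rN < ‖x j0 - b‖ := by
    have htri : ‖(5 * σ) • e1 - μ • e1‖ ≤
        ‖x j0 - (5 * σ) • e1‖ + ‖x j0 - b‖ + ‖μ • e1 - b‖ := by
      calc ‖(5 * σ) • e1 - μ • e1‖ = dist ((5 * σ) • e1) (μ • e1) := (dist_eq_norm _ _).symm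
        _ ≤ dist ((5 * σ) • e1) (x j0) + dist (x j0) b + dist b (μ • e1) :=
            dist_triangle4 _ _ _ _
        _ = ‖x j0 - (5 * σ) • e1‖ + ‖x j0 - b‖ + ‖μ • e1 - b‖ := by
            rw [dist_eq_norm, dist_eq_norm, dist_eq_norm, norm_sub_rev ((5 * σ) • e1),
              norm_sub_rev b]
    rw [hσμ] at htri
    linarith [hj0ball, htri, hbb]
  have hcmp := hj j0
  linarith [hkey, hup, hlow, hcmp]
end

section
/- Suppose $N \ge 3$, $r_N = \frac{1}{4(N+1)}$, $D = \emptyset$, $|C| \ge \lfloor (N-1)/2 \rfloor + 1$, $|G| \le \lceil (N-1)/2 \rceil$, $|G|+|C|=N$, $x_i \in B(\gamma, 2r_N)$ for $i \in C$ and $x_j \in B(-5e_1, 2r_N)$ for $j \in G$ (with $\gamma$ as before, $G \neq \emptyset$). Then for $\ell \in C$ and $\bar{x}^{N+1} = \frac{1}{N+1}(\sum_i x_i + x_\ell)$, one has $\min_{i \in G} |x_i - \bar{x}^{N+1}| > \max_{j \in C} |x_j - \bar{x}^{N+1}|$. -/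
set_option maxHeartbeats 1000000

open Finset

theorem stmt17 {d N : ℕ} (hd : 0 < d) (hN : 3 ≤ N)
    (x : Fin N → EuclideanSpace ℝ (Fin d))
    (G C : Finset (Fin N))
    (hpart : G ∪ C = Finset.univ) (hGC : Disjoint G C)
    (hGne : G.Nonempty) (hCne : C.Nonempty)
    (e1 γ : EuclideanSpace ℝ (Fin d))
    (he1 : e1 = EuclideanSpace.single (⟨0, hd⟩ : Fin d) (1 : ℝ))
    (hγ : γ = if N % 2 = 1 then 0 else (-5 / ((N : ℝ) - 1)) • e1)
    (rN : ℝ) (hrN : rN = 1 / (4 * ((N : ℝ) + 1)))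
    (hC : ∀ i ∈ C, x i ∈ Metric.ball γ (2 * rN))
    (hG : ∀ j ∈ G, x j ∈ Metric.ball ((-5 : ℝ) • e1) (2 * rN))
    (hcardC : (N - 1) / 2 + 1 ≤ C.card)
    (hcardG : G.card ≤ N / 2)
    (hsum : G.card + C.card = N) :
    ∀ ℓ ∈ C, ∀ i ∈ G, ∀ j ∈ C,
      ‖x j - ((N : ℝ) + 1)⁻¹ • ((∑ i', x i') + x ℓ)‖ <
        ‖x i - ((N : ℝ) + 1)⁻¹ • ((∑ i', x i') + x ℓ)‖ := by
  intro ℓ hℓ i hi j hj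
  have hNpos : (0:ℝ) < (N:ℝ) + 1 := by positivity
  have hNne : ((N:ℝ) + 1) ≠ 0 := ne_of_gt hNpos
  have hrpos : 0 < rN := by rw [hrN]; positivity
  have hne1 : ‖e1‖ = 1 := by rw [he1, EuclideanSpace.norm_single]; norm_num
  set c : ℝ := (C.card : ℝ) with hc
  set g : ℝ := (G.card : ℝ) with hg
  have hcg : g + c = (N:ℝ) := by rw [hc, hg]; exact_mod_cast hsum
  have hgcN : G.card ≤ C.card := by omega
  have hgc : g ≤ c := by rw [hc, hg]; exact_mod_cast hgcN
  have hgpos : (0:ℝ) ≤ g := by positivity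
  set b : EuclideanSpace ℝ (Fin d) := ((N:ℝ) + 1)⁻¹ • ((∑ i', x i') + x ℓ) with hb
  set b₀ : EuclideanSpace ℝ (Fin d) :=
    ((N:ℝ) + 1)⁻¹ • ((c + 1) • γ + g • ((-5:ℝ) • e1)) with hb₀
  set v : EuclideanSpace ℝ (Fin d) := γ + (5:ℝ) • e1 with hv
  -- norm of v
  have hvnorm : (2:ℝ) ≤ ‖v‖ := by
    rcases Nat.even_or_odd N with hE | hO
    · have hmod : N % 2 = 0 := Nat.even_iff.mp hE
      have hN4 : 4 ≤ N := by omega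
      have hN4' : (4:ℝ) ≤ (N:ℝ) := by exact_mod_cast hN4
      have h3 : (3:ℝ) ≤ (N:ℝ) - 1 := by linarith
      have hγ' : γ = (-5 / ((N : ℝ) - 1)) • e1 := by rw [hγ]; simp [hmod]
      have hveq : v = (-5 / ((N : ℝ) - 1) + 5) • e1 := by
        rw [hv, hγ', ← add_smul]
      rw [hveq, norm_smul, hne1, mul_one, Real.norm_eq_abs]
      have hfrac : -5 / ((N : ℝ) - 1) + 5 ≥ 10/3 := by
        have h1 : (5:ℝ) / ((N:ℝ) - 1) ≤ 5/3 := by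
          apply div_le_div_of_nonneg_left (by norm_num) (by norm_num) h3
        have : -5 / ((N : ℝ) - 1) = -(5 / ((N:ℝ) - 1)) := by ring
        rw [this]; linarith
      rw [abs_of_nonneg (by linarith)]; linarith
    · have hmod : N % 2 = 1 := Nat.odd_iff.mp hO
      have hγ' : γ = 0 := by rw [hγ]; simp [hmod]
      have hveq : v = (5:ℝ) • e1 := by rw [hv, hγ', zero_add]
      rw [hveq, norm_smul, hne1, mul_one, Real.norm_eq_abs]
      norm_num
  -- key identities
  have key1 : γ - b₀ = (g / ((N:ℝ) + 1)) • v := by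
    rw [hb₀, hv]
    match_scalars <;> (field_simp; try linarith)
  have key2 : (-5:ℝ) • e1 - b₀ = (-((c + 1) / ((N:ℝ) + 1))) • v := by
    rw [hb₀, hv]
    match_scalars <;> (field_simp; try linarith)
  have hsplit : (∑ i', x i') = (∑ k ∈ G, x k) + (∑ k ∈ C, x k) := by
    rw [← Finset.sum_union hGC, hpart]
  have hmul : ((N:ℝ) + 1) • (b - b₀) =
      (∑ k ∈ C, (x k - γ)) + (∑ k ∈ G, (x k - (-5:ℝ) • e1)) + (x ℓ - γ) := by
    rw [smul_sub, hb, hb₀, smul_inv_smul₀ hNne, smul_inv_smul₀ hNne,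
      Finset.sum_sub_distrib, Finset.sum_sub_distrib, Finset.sum_const, Finset.sum_const,
      ← Nat.cast_smul_eq_nsmul ℝ C.card γ, ← Nat.cast_smul_eq_nsmul ℝ G.card ((-5:ℝ) • e1),
      hsplit, ← hc, ← hg]
    module
  have hCb : ∀ k ∈ C, ‖x k - γ‖ ≤ 2 * rN := fun k hk =>
    le_of_lt (by simpa [Metric.mem_ball, dist_eq_norm] using hC k hk)
  have hGb : ∀ k ∈ G, ‖x k - (-5:ℝ) • e1‖ ≤ 2 * rN := fun k hk =>
    le_of_lt (by simpa [Metric.mem_ball, dist_eq_norm] using hG k hk)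
  have hδ : ‖b - b₀‖ ≤ 2 * rN := by
    have h1 : ‖∑ k ∈ C, (x k - γ)‖ ≤ c * (2 * rN) := by
      calc ‖∑ k ∈ C, (x k - γ)‖ ≤ ∑ k ∈ C, ‖x k - γ‖ := norm_sum_le _ _
        _ ≤ ∑ k ∈ C, (2 * rN) := Finset.sum_le_sum hCb
        _ = c * (2 * rN) := by rw [Finset.sum_const, nsmul_eq_mul, hc]
    have h2 : ‖∑ k ∈ G, (x k - (-5:ℝ) • e1)‖ ≤ g * (2 * rN) := by
      calc ‖∑ k ∈ G, (x k - (-5:ℝ) • e1)‖ ≤ ∑ k ∈ G, ‖x k - (-5:ℝ) • e1‖ := norm_sum_le _ _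
        _ ≤ ∑ k ∈ G, (2 * rN) := Finset.sum_le_sum hGb
        _ = g * (2 * rN) := by rw [Finset.sum_const, nsmul_eq_mul, hg]
    have h3 : ‖x ℓ - γ‖ ≤ 2 * rN := hCb ℓ hℓ
    have h4 : ‖((N:ℝ) + 1) • (b - b₀)‖ ≤ ((N:ℝ) + 1) * (2 * rN) := by
      rw [hmul]
      calc ‖(∑ k ∈ C, (x k - γ)) + (∑ k ∈ G, (x k - (-5:ℝ) • e1)) + (x ℓ - γ)‖
          ≤ ‖(∑ k ∈ C, (x k - γ))‖ + ‖(∑ k ∈ G, (x k - (-5:ℝ) • e1))‖ + ‖x ℓ - γ‖ :=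
            norm_add₃_le
        _ ≤ c * (2 * rN) + g * (2 * rN) + 2 * rN := by linarith
        _ = ((N:ℝ) + 1) * (2 * rN) := by rw [← hcg]; ring
    rw [norm_smul, Real.norm_eq_abs, abs_of_pos hNpos] at h4
    exact le_of_mul_le_mul_left (by linarith) hNpos
  -- norms of key vectors
  have hn1 : ‖γ - b₀‖ = g / ((N:ℝ) + 1) * ‖v‖ := by
    rw [key1, norm_smul, Real.norm_eq_abs, abs_of_nonneg (div_nonneg hgpos hNpos.le)]
  have hn2 : ‖(-5:ℝ) • e1 - b₀‖ = (c + 1) / ((N:ℝ) + 1) * ‖v‖ := by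
    rw [key2, norm_smul, Real.norm_eq_abs, abs_neg, abs_of_nonneg (div_nonneg (by rw [hc]; positivity) hNpos.le)]
  -- upper bound for x j
  have hA : ‖x j - b‖ < 2 * rN + g / ((N:ℝ) + 1) * ‖v‖ + 2 * rN := by
    have hrw : x j - b = (x j - γ) + (γ - b₀) + (b₀ - b) := by abel
    have hjb : ‖x j - γ‖ < 2 * rN := by
      simpa [Metric.mem_ball, dist_eq_norm] using hC j hj
    have h := norm_add₃_le (a := x j - γ) (b := γ - b₀) (c := b₀ - b)
    rw [← hrw, hn1] at h
    have hb₀b : ‖b₀ - b‖ ≤ 2 * rN := by rw [norm_sub_rev]; exact hδ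
    linarith
  -- lower bound for x i
  have hB : (c + 1) / ((N:ℝ) + 1) * ‖v‖ - 2 * rN - 2 * rN ≤ ‖x i - b‖ := by
    have hrw : (-5:ℝ) • e1 - b₀ = ((-5:ℝ) • e1 - x i) + (x i - b) + (b - b₀) := by abel
    have h := norm_add₃_le (a := (-5:ℝ) • e1 - x i) (b := x i - b) (c := b - b₀)
    rw [← hrw, hn2] at h
    have hib : ‖(-5:ℝ) • e1 - x i‖ ≤ 2 * rN := by
      rw [norm_sub_rev]; exact hGb i hi
    linarith
  -- gap
  have hgap : 2 * rN + g / ((N:ℝ) + 1) * ‖v‖ + 2 * rN ≤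
      (c + 1) / ((N:ℝ) + 1) * ‖v‖ - 2 * rN - 2 * rN := by
    have h8 : 8 * rN = 2 / ((N:ℝ) + 1) := by rw [hrN]; field_simp; ring
    have hge : (c + 1 - g) * ‖v‖ ≥ 2 := by
      have h1 : (1:ℝ) ≤ c + 1 - g := by linarith
      calc (2:ℝ) = 1 * 2 := by ring
        _ ≤ (c + 1 - g) * ‖v‖ := mul_le_mul h1 hvnorm (by norm_num) (by linarith)
    have : 2 / ((N:ℝ) + 1) ≤ (c + 1 - g) / ((N:ℝ) + 1) * ‖v‖ := by
      rw [div_mul_eq_mul_div, div_le_div_iff₀ hNpos hNpos]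
      nlinarith
    have heq : (c + 1 - g) / ((N:ℝ) + 1) * ‖v‖ =
        (c + 1) / ((N:ℝ) + 1) * ‖v‖ - g / ((N:ℝ) + 1) * ‖v‖ := by ring
    linarith
  linarith
end
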